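/- Assume α_k → ∞ and ε_k → 0, and let the sequences satisfy the inexact penalty KKT conditions for every k. If K ⊆ ℕ is infinite and x^k → x* along K, then there exist an infinite subset K′ ⊆ K and a point y* ∈ ℝⁿ such that y^k → y* along K′ and x*_i·y*_i = 0 for every i = 1, …, n. -/

import Mathlib

open Filter Topology

noncomputable section

/-- Euclidean n-space. -/
abbrev E (n : ℕ) : Type := EuclideanSpace ℝ (Fin n)

/-- Regard a plain function as a vector of Euclidean space. -/
def vec {ι : Type*} [Fintype ι] (v : ι → ℝ) : EuclideanSpace ℝ ι :=
  (WithLp.equiv 2 (ι → ℝ)).symm v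

@[simp] lemma vec_apply {ι : Type*} [Fintype ι] (v : ι → ℝ) (i : ι) : vec v i = v i := rfl

lemma coord_abs_le_norm {n : ℕ} (v : E n) (i : Fin n) : |v i| ≤ ‖v‖ := by
  rw [EuclideanSpace.norm_eq]
  calc |v i| = Real.sqrt (‖v i‖ ^ 2) := by
        rw [Real.sqrt_sq (norm_nonneg _), Real.norm_eq_abs]
    _ ≤ _ := Real.sqrt_le_sqrt
        (Finset.single_le_sum (f := fun j => ‖v j‖ ^ 2)
          (fun j _ => sq_nonneg _) (Finset.mem_univ i))

lemma norm_le_of_coord {n : ℕ} (v : E n) (B : ℝ) (h : ∀ i, |v i| ≤ B) :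
    ‖v‖ ≤ Real.sqrt (n * B ^ 2) := by
  rw [EuclideanSpace.norm_eq]
  apply Real.sqrt_le_sqrt
  calc ∑ i, ‖v i‖ ^ 2 ≤ ∑ _i : Fin n, B ^ 2 := by
        refine Finset.sum_le_sum fun i _ => ?_
        rw [Real.norm_eq_abs]
        exact pow_le_pow_left₀ (abs_nonneg _) (h i) 2
    _ = n * B ^ 2 := by simp [Finset.sum_const]

lemma inf_principal_range_le {ψ : ℕ → ℕ} (hψ : StrictMono ψ) :
    atTop ⊓ Filter.principal (Set.range ψ) ≤ Filter.map ψ atTop := by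
  intro S hS
  rw [Filter.mem_map, Filter.mem_atTop_sets] at hS
  obtain ⟨N, hN⟩ := hS
  refine Filter.mem_of_superset
    (Filter.inter_mem_inf (Filter.Ici_mem_atTop (ψ N)) (Filter.mem_principal_self _)) ?_
  rintro x ⟨hx1, j, rfl⟩
  exact hN j (hψ.le_iff_le.mp hx1)

/-- The inexact penalty KKT conditions at stage k (step 2 of the exact penalty
algorithm). -/
def inexactKKT {n m q : ℕ} (f : E n → ℝ) (g : Fin m → E n → ℝ) (h : Fin q → E n → ℝ)
    (p : Fin n → ℝ → ℝ) (α ε : ℝ)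
    (x y : E n) (νx νy : E n) (lam : Fin m → ℝ) (mu : Fin q → ℝ) : Prop :=
  (∀ i, 0 ≤ x i) ∧ (∀ i, 0 ≤ y i) ∧ (∀ i, 0 ≤ lam i) ∧
  (∀ i, 0 ≤ νx i) ∧ (∀ i, 0 ≤ νy i) ∧
  ‖gradient f x + (∑ i, lam i • gradient (g i) x) + (∑ j, mu j • gradient (h j) x) +
      α • y - νx‖ ≤ ε ∧
  ‖vec (fun i => deriv (p i) (y i) + α * x i - νy i)‖ ≤ ε ∧
  (∀ i, |min (-(g i x)) (lam i)| ≤ ε) ∧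
  ‖vec (fun j => h j x)‖ ≤ ε ∧
  (∀ i, min (x i) (νx i) ≤ ε) ∧
  (∀ i, min (y i) (νy i) ≤ ε)

/-- accumulation points of the exact penalty method are feasible
for the complementarity constraint. -/
theorem stmt_17 {n m q : ℕ} (hn : 1 ≤ n) {ρ : ℝ} (hρ : 0 < ρ)
    (f : E n → ℝ) (g : Fin m → E n → ℝ) (h : Fin q → E n → ℝ)
    (hf : ContDiff ℝ 1 f) (hg : ∀ i, ContDiff ℝ 1 (g i)) (hh : ∀ j, ContDiff ℝ 1 (h j))
    (p : Fin n → ℝ → ℝ) (s : Fin n → ℝ)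
    (hp : ∀ i, ContDiff ℝ 1 (p i))
    (hconv : ∀ i, ConvexOn ℝ Set.univ (p i))
    (hspos : ∀ i, 0 < s i)
    (hmin : ∀ i t, p i (s i) ≤ p i t)
    (hstrict : ∀ i t, t ≠ s i → p i (s i) < p i t)
    (hscale : ∀ i, p i 0 - p i (s i) = ρ)
    (αk εk : ℕ → ℝ) (hαpos : ∀ k, 0 < αk k) (hεnn : ∀ k, 0 ≤ εk k)
    (hα : Tendsto αk atTop atTop) (hε : Tendsto εk atTop (𝓝 0))
    (xk yk νxk νyk : ℕ → E n) (lamk : ℕ → Fin m → ℝ) (muk : ℕ → Fin q → ℝ)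
    (hKKT : ∀ k, inexactKKT f g h p (αk k) (εk k) (xk k) (yk k) (νxk k) (νyk k)
      (lamk k) (muk k))
    (K : Set ℕ) (hK : K.Infinite) (xstar : E n)
    (hconv' : Tendsto xk (atTop ⊓ Filter.principal K) (𝓝 xstar)) :
    ∃ (K' : Set ℕ) (ystar : E n), K' ⊆ K ∧ K'.Infinite ∧
      Tendsto yk (atTop ⊓ Filter.principal K') (𝓝 ystar) ∧
      ∀ i, xstar i * ystar i = 0 := by
  classical
  -- basic differentiability facts
  have hpdiff : ∀ i t, DifferentiableAt ℝ (p i) t := fun i t =>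
    ((hp i).differentiable one_ne_zero) t
  have hmono : ∀ i, Monotone (deriv (p i)) := by
    intro i
    exact monotoneOn_univ.mp
      ((hconv i).monotoneOn_deriv (fun x _ => hpdiff i x))
  -- the derivative at s i + 1 is positive
  have hci : ∀ i, 0 < deriv (p i) (s i + 1) := by
    intro i
    obtain ⟨c, hc, hceq⟩ := exists_deriv_eq_slope (p i)
      (show s i < s i + 1 by linarith)
      ((hp i).continuous.continuousOn)
      (((hp i).differentiable one_ne_zero).differentiableOn)
    have hlt : p i (s i) < p i (s i + 1) := hstrict i (s i + 1) (by linarith)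
    have hcpos : 0 < deriv (p i) c := by
      rw [hceq]
      have h1 : (0:ℝ) < p i (s i + 1) - p i (s i) := by linarith
      have h2 : (0:ℝ) < s i + 1 - s i := by linarith
      exact div_pos h1 h2
    exact lt_of_lt_of_le hcpos (hmono i hc.2.le)
  -- key coordinate bound from the KKT conditions
  have key : ∀ k, εk k ≤ 1 → (∀ i, εk k < deriv (p i) (s i + 1) / 2) →
      ∀ i, yk k i ≤ max (s i + 1) 1 := by
    intro k hε1 hεc i
    by_contra hy
    push_neg at hy
    obtain ⟨h1, h2, h3, h4, h5, h6, h7, h8, h9, h10, h11⟩ := hKKT k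
    have hcoord : |deriv (p i) (yk k i) + αk k * xk k i - νyk k i| ≤ εk k := by
      have := coord_abs_le_norm (vec fun i => deriv (p i) (yk k i) +
        αk k * xk k i - νyk k i) i
      rw [vec_apply] at this
      exact this.trans h7
    have hyε : εk k < yk k i := lt_of_le_of_lt (hε1.trans (le_max_right _ _)) hy
    have hν : νyk k i ≤ εk k := (min_le_iff.mp (h11 i)).resolve_left (not_le.mpr hyε)
    have hαx : 0 ≤ αk k * xk k i := mul_nonneg (hαpos k).le (h1 i)
    have hd1 : deriv (p i) (s i + 1) ≤ deriv (p i) (yk k i) :=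
      hmono i (le_of_lt (lt_of_le_of_lt (le_max_left _ _) hy))
    have habs := (abs_le.mp hcoord).2
    have := hεc i
    linarith
  -- a uniform bound on coordinates, eventually
  set B : ℝ := ∑ j, (s j + 1) with hB
  have hBi : ∀ i, max (s i + 1) 1 ≤ B := by
    intro i
    have h1 : s i + 1 ≤ B :=
      Finset.single_le_sum (f := fun j => s j + 1)
        (fun j _ => show (0:ℝ) ≤ s j + 1 by have := hspos j; linarith)
        (Finset.mem_univ i)
    have h2 : (1 : ℝ) ≤ B := by have := hspos i; linarith
    exact max_le h1 h2
  set C : ℝ := Real.sqrt (n * B ^ 2) with hC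
  -- eventually the hypotheses of `key` hold
  have Eall : ∀ᶠ k in atTop, εk k ≤ 1 ∧ ∀ i, εk k < deriv (p i) (s i + 1) / 2 := by
    have e1 : ∀ᶠ k in atTop, εk k ≤ 1 :=
      hε.eventually (eventually_le_nhds (by norm_num))
    have e2 : ∀ᶠ k in atTop, ∀ i, εk k < deriv (p i) (s i + 1) / 2 :=
      eventually_all.mpr fun i =>
        hε.eventually (eventually_lt_nhds (by have := hci i; linarith))
    exact e1.and e2
  obtain ⟨N0, hN0⟩ := eventually_atTop.mp Eall
  have hbound : ∀ k, N0 ≤ k → ‖yk k‖ ≤ C := by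
    intro k hk
    apply norm_le_of_coord
    intro i
    obtain ⟨he1, he2⟩ := hN0 k hk
    have hy := key k he1 he2 i
    have hynn := (hKKT k).2.1 i
    rw [abs_of_nonneg hynn]
    exact hy.trans (hBi i)
  -- the subsequence in K
  set φ : ℕ → ℕ := Nat.nth (· ∈ K) with hφdef
  have hφ : StrictMono φ := Nat.nth_strictMono hK
  have hφK : ∀ j, φ j ∈ K := fun j => Nat.nth_mem_of_infinite hK j
  set z : ℕ → E n := fun j => yk (φ (N0 + j)) with hzdef
  have hz : ∀ j, z j ∈ Metric.closedBall (0 : E n) C := by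
    intro j
    rw [Metric.mem_closedBall, dist_zero_right]
    exact hbound _ (le_trans (Nat.le_add_right N0 j) (hφ.le_apply))
  obtain ⟨a, _, σ, hσ, hza⟩ :=
    (isCompact_closedBall (0 : E n) C).tendsto_subseq hz
  set ψ : ℕ → ℕ := fun j => φ (N0 + σ j) with hψdef
  have hψ : StrictMono ψ := fun i j hij => hφ (by have := hσ hij; omega)
  have hψK : ∀ j, ψ j ∈ K := fun j => hφK _
  have hza' : Tendsto (yk ∘ ψ) atTop (𝓝 a) := hza
  refine ⟨Set.range ψ, a, ?_, Set.infinite_range_of_injective hψ.injective, ?_, ?_⟩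
  · rintro x ⟨j, rfl⟩; exact hψK j
  · exact (Filter.tendsto_map'_iff.mpr hza').mono_left (inf_principal_range_le hψ)
  · -- complementarity
    intro i
    -- xk along the subsequence tends to xstar
    have hψfilt : Tendsto ψ atTop (atTop ⊓ Filter.principal K) :=
      Filter.tendsto_inf.mpr ⟨hψ.tendsto_atTop,
        Filter.tendsto_principal.mpr (Filter.Eventually.of_forall hψK)⟩
    have hxs : Tendsto (xk ∘ ψ) atTop (𝓝 xstar) := hconv'.comp hψfilt
    have hxci : Tendsto (fun j => xk (ψ j) i) atTop (𝓝 (xstar i)) := by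
      exact ((EuclideanSpace.proj (𝕜 := ℝ) i).continuous.tendsto xstar).comp hxs
    have hyci : Tendsto (fun j => yk (ψ j) i) atTop (𝓝 (a i)) := by
      exact ((EuclideanSpace.proj (𝕜 := ℝ) i).continuous.tendsto a).comp hza'
    by_contra hneq
    have hx0 : 0 ≤ xstar i := ge_of_tendsto' hxci (fun j => (hKKT (ψ j)).1 i)
    have hy0 : 0 ≤ a i := ge_of_tendsto' hyci (fun j => (hKKT (ψ j)).2.1 i)
    have hxpos : 0 < xstar i := by
      rcases hx0.eq_or_lt with hh0 | hh0
      · exact absurd (by rw [← hh0, zero_mul]) hneq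
      · exact hh0
    have hypos : 0 < a i := by
      rcases hy0.eq_or_lt with hh0 | hh0
      · exact absurd (by rw [← hh0, mul_zero]) hneq
      · exact hh0
    set D : ℝ := 2 * (a i + |deriv (p i) 0| + 1) / (xstar i) with hD
    have hDx : D * (xstar i / 2) = a i + |deriv (p i) 0| + 1 := by
      rw [hD]
      field_simp
    have Ea : ∀ᶠ j in atTop, xstar i / 2 < xk (ψ j) i :=
      hxci.eventually (eventually_gt_nhds (by linarith))
    have Eb : ∀ᶠ j in atTop, a i / 2 < yk (ψ j) i :=
      hyci.eventually (eventually_gt_nhds (by linarith))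
    have Ec : ∀ᶠ j in atTop, εk (ψ j) < a i / 2 :=
      (hε.comp hψ.tendsto_atTop).eventually (eventually_lt_nhds (by linarith))
    have Ed : ∀ᶠ j in atTop, D < αk (ψ j) :=
      (hα.comp hψ.tendsto_atTop).eventually (eventually_gt_atTop D)
    obtain ⟨j, hj1, hj2, hj3, hj4⟩ := (Ea.and (Eb.and (Ec.and Ed))).exists
    set k := ψ j with hk
    obtain ⟨h1, h2, h3, h4, h5, h6, h7, h8, h9, h10, h11⟩ := hKKT k
    have hcoord : |deriv (p i) (yk k i) + αk k * xk k i - νyk k i| ≤ εk k := by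
      have := coord_abs_le_norm (vec fun i => deriv (p i) (yk k i) +
        αk k * xk k i - νyk k i) i
      rw [vec_apply] at this
      exact this.trans h7
    have hyε : εk k < yk k i := lt_trans hj3 hj2
    have hν : νyk k i ≤ εk k := (min_le_iff.mp (h11 i)).resolve_left (not_le.mpr hyε)
    have hd0 : deriv (p i) 0 ≤ deriv (p i) (yk k i) := hmono i (h2 i)
    have hup := (abs_le.mp hcoord).2
    -- lower bound on αk k * xk k i
    have hm1 : αk k * (xstar i / 2) < αk k * xk k i :=
      mul_lt_mul_of_pos_left hj1 (hαpos k)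
    have hm2 : D * (xstar i / 2) < αk k * (xstar i / 2) :=
      mul_lt_mul_of_pos_right hj4 (by linarith)
    have hnegabs : -|deriv (p i) 0| ≤ deriv (p i) 0 := neg_abs_le _
    linarith
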